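/- Let H be a real Hilbert space, let A : H → H be monotone and L-Lipschitz continuous, let J : H → H be firmly nonexpansive, let 0 < γ < 1/L, and define U : H → H by U = I − J ∘ (I − γA) − γ(A − A ∘ (J ∘ (I − γA))). Then U is quasi-cocoercive with modulus (1 − γL)/(1 + γL)²; that is, for every x* ∈ H with U(x*) = 0 and every x ∈ H, ⟨U(x), x − x*⟩ ≥ ((1 − γL)/(1 + γL)²)‖U(x)‖². -/

import Mathlib

open InnerProductSpace

theorem stmt18
    {H : Type*} [NormedAddCommGroup H] [InnerProductSpace ℝ H] [CompleteSpace H]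
    (A J : H → H) (L γ : ℝ) (hL : 0 < L)
    (hmono : ∀ x y : H, 0 ≤ ⟪A x - A y, x - y⟫_ℝ)
    (hLip : ∀ x y : H, ‖A x - A y‖ ≤ L * ‖x - y‖)
    (hJ : ∀ x y : H, ‖J x - J y‖ ^ 2 ≤ ⟪J x - J y, x - y⟫_ℝ)
    (hγ : 0 < γ) (hγ' : γ < 1 / L)
    (U : H → H)
    (hU : ∀ x : H, U x = x - J (x - γ • A x) - γ • (A x - A (J (x - γ • A x)))) :
    ∀ xs : H, U xs = 0 → ∀ x : H,
      (1 - γ * L) / (1 + γ * L) ^ 2 * ‖U x‖ ^ 2 ≤ ⟪U x, x - xs⟫_ℝ := by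
  intro xs hxs x
  have hγL : γ * L < 1 := by
    have h := (lt_div_iff₀ hL).mp hγ'
    linarith
  -- Step 1: xs is a fixed point: J (xs - γ • A xs) = xs
  set ys := J (xs - γ • A xs) with hys
  have h0 : xs - ys - γ • (A xs - A ys) = 0 := by rw [← hU xs]; exact hxs
  have hxy : xs - ys = γ • (A xs - A ys) := by
    rw [sub_eq_zero] at h0; exact h0
  have hnorm : ‖xs - ys‖ ≤ γ * L * ‖xs - ys‖ := by
    calc ‖xs - ys‖ = γ * ‖A xs - A ys‖ := by
          rw [hxy, norm_smul, Real.norm_eq_abs, abs_of_pos hγ]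
      _ ≤ γ * (L * ‖xs - ys‖) := by
          exact mul_le_mul_of_nonneg_left (hLip _ _) hγ.le
      _ = γ * L * ‖xs - ys‖ := by ring
  have hfix : ys = xs := by
    by_contra h
    have hne : xs - ys ≠ 0 := fun hc => h (by rwa [sub_eq_zero, eq_comm] at hc)
    have hpos : 0 < ‖xs - ys‖ := norm_pos_iff.mpr hne
    nlinarith
  -- Step 2: main estimate
  set y := J (x - γ • A x) with hy
  have hUx : U x = x - y - γ • (A x - A y) := hU x
  -- firm nonexpansiveness applied at the two points
  have h1 : ‖y - xs‖ ^ 2 ≤ ⟪y - xs, (x - γ • A x) - (xs - γ • A xs)⟫_ℝ := by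
    have := hJ (x - γ • A x) (xs - γ • A xs)
    rwa [← hys, hfix] at this
  -- scalar abbreviations
  set a := ⟪x - y, x - y⟫_ℝ with ha
  set b := ⟪y - xs, x - y⟫_ℝ with hb
  set c := ⟪A x - A y, x - y⟫_ℝ with hc
  set e := ⟪A x - A y, y - xs⟫_ℝ with he
  set f := ⟪A y - A xs, y - xs⟫_ℝ with hf
  have hf0 : 0 ≤ f := hmono y xs
  have hanorm : a = ‖x - y‖ ^ 2 := real_inner_self_eq_norm_sq _
  -- expand h1
  have h1' : γ * (e + f) ≤ b := by
    have hsplit : (x - γ • A x) - (xs - γ • A xs)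
        = (x - y) + (y - xs) - γ • ((A x - A y) + (A y - A xs)) := by
      module
    rw [hsplit] at h1
    have hx1 : ⟪y - xs, (x - y) + (y - xs) - γ • ((A x - A y) + (A y - A xs))⟫_ℝ
        = b + ‖y - xs‖ ^ 2 - γ * (e + f) := by
      simp only [hb, he, hf, ← real_inner_self_eq_norm_sq, inner_sub_left, inner_sub_right,
        inner_add_right, real_inner_smul_right, real_inner_comm]
      ring
    rw [hx1] at h1
    linarith
  -- Cauchy-Schwarz + Lipschitz
  have hcs : c ≤ L * ‖x - y‖ ^ 2 := by
    calc c ≤ ‖A x - A y‖ * ‖x - y‖ := real_inner_le_norm _ _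
      _ ≤ (L * ‖x - y‖) * ‖x - y‖ :=
          mul_le_mul_of_nonneg_right (hLip _ _) (norm_nonneg _)
      _ = L * ‖x - y‖ ^ 2 := by ring
  -- expand the goal inner product
  have hexp : ⟪U x, x - xs⟫_ℝ = a + b - γ * c - γ * e := by
    have hx2 : x - xs = (x - y) + (y - xs) := by abel
    rw [hUx, hx2]
    simp only [ha, hb, hc, he, inner_sub_left, inner_sub_right, inner_add_right,
      real_inner_smul_left, real_inner_smul_right, real_inner_comm]
    ring
  have hmain : (1 - γ * L) * ‖x - y‖ ^ 2 ≤ ⟪U x, x - xs⟫_ℝ := by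
    rw [hexp]
    have : a = ‖x - y‖ ^ 2 := real_inner_self_eq_norm_sq _
    nlinarith [mul_le_mul_of_nonneg_left hcs hγ.le, mul_nonneg hγ.le hf0]
  -- bound ‖U x‖
  have hUb : ‖U x‖ ≤ (1 + γ * L) * ‖x - y‖ := by
    calc ‖U x‖ = ‖(x - y) - γ • (A x - A y)‖ := by rw [hUx]
      _ ≤ ‖x - y‖ + ‖γ • (A x - A y)‖ := norm_sub_le _ _
      _ = ‖x - y‖ + γ * ‖A x - A y‖ := by
          rw [norm_smul, Real.norm_eq_abs, abs_of_pos hγ]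
      _ ≤ ‖x - y‖ + γ * (L * ‖x - y‖) :=
          by linarith [mul_le_mul_of_nonneg_left (hLip x y) hγ.le]
      _ = (1 + γ * L) * ‖x - y‖ := by ring
  -- conclude
  have hpos : (0:ℝ) < 1 + γ * L := by positivity
  have h1γL : 0 ≤ 1 - γ * L := by linarith
  have hUb2 : ‖U x‖ ^ 2 ≤ (1 + γ * L) ^ 2 * ‖x - y‖ ^ 2 := by
    nlinarith [norm_nonneg (U x), norm_nonneg (x - y)]
  calc (1 - γ * L) / (1 + γ * L) ^ 2 * ‖U x‖ ^ 2
      ≤ (1 - γ * L) / (1 + γ * L) ^ 2 * ((1 + γ * L) ^ 2 * ‖x - y‖ ^ 2) := by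
        apply mul_le_mul_of_nonneg_left hUb2
        positivity
    _ = (1 - γ * L) * ‖x - y‖ ^ 2 := by field_simp
    _ ≤ ⟪U x, x - xs⟫_ℝ := hmain
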